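/- Let n, d ≥ 1, let f_1, …, f_n : ℝ^d → ℝ be differentiable convex functions, let f := (1/n)·Σ_{i=1}^n f_i, and let w* ∈ ℝ^d satisfy ∇f(w*) = 0. Let (Ω, P) be a finite probability space, let v : Ω → ℝ^n be a sampling vector, i.e. E[v_i] = 1 for every i ∈ {1,…,n}, and for each ω ∈ Ω set f_{v(ω)}(w) := (1/n)·Σ_{i=1}^n f_i(w)·v_i(ω). Suppose for each ω there is L_v(ω) ≥ 0 such that f_{v(ω)} is convex and its gradient is L_v(ω)-Lipschitz. Then for every w ∈ ℝ^d: E[‖∇f_v(w) − ∇f_v(w*)‖₂²] ≤ 2·(max_{i∈[n]} E[L_v·v_i])·(f(w) − f(w*)). In other words, the expected smoothness inequality holds with constant 𝓛 = max_{i∈[n]} E[L_v·v_i]. -/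

import Mathlib

open Finset RealInnerProductSpace

section Aux

variable {E : Type*} [NormedAddCommGroup E] [InnerProductSpace ℝ E] [CompleteSpace E]

lemma aux_hasDerivAt_line {g : E → ℝ} (hg : Differentiable ℝ g) (y u : E) (t : ℝ) :
    HasDerivAt (fun s : ℝ => g (y + s • u)) ⟪gradient g (y + t • u), u⟫ t := by
  have hline : HasDerivAt (fun s : ℝ => y + s • u) u t := by
    simpa using ((hasDerivAt_id t).smul_const u).const_add y
  have hfd := hasGradientAt_iff_hasFDerivAt.mp (hg (y + t • u)).hasGradientAt
  have := hfd.comp_hasDerivAt t hline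
  simpa [InnerProductSpace.toDual_apply_apply, Function.comp_def] using this

lemma aux_convex_lower {g : E → ℝ} (hg : Differentiable ℝ g)
    (hconv : ConvexOn ℝ Set.univ g) (x y : E) :
    g y + ⟪gradient g y, x - y⟫ ≤ g x := by
  set ψ : ℝ → ℝ := fun s => g (y + s • (x - y)) with hψdef
  have hψconv : ConvexOn ℝ Set.univ ψ := by
    have h := hconv.comp_affineMap (AffineMap.lineMap y x : ℝ →ᵃ[ℝ] E)
    have heq : ψ = g ∘ (AffineMap.lineMap y x : ℝ →ᵃ[ℝ] E) := by
      funext s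
      simp [ψ, AffineMap.lineMap_apply, add_comm]
    rw [heq]
    simpa using h
  have hd : HasDerivAt ψ ⟪gradient g (y + (0:ℝ) • (x - y)), x - y⟫ 0 :=
    aux_hasDerivAt_line hg y (x - y) 0
  have hslope := hψconv.le_slope_of_hasDerivAt (Set.mem_univ (0:ℝ)) (Set.mem_univ (1:ℝ))
    one_pos hd
  have h0 : ψ 0 = g y := by simp [ψ]
  have h1 : ψ 1 = g x := by simp [ψ]
  have hsl : slope ψ 0 1 = g x - g y := by
    rw [slope_def_field]; simp [h0, h1]
  rw [hsl] at hslope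
  simp only [zero_smul, add_zero] at hslope
  linarith

lemma aux_descent {g : E → ℝ} (hg : Differentiable ℝ g) {L : ℝ} (_hL : 0 ≤ L)
    (hsm : ∀ a b, ‖gradient g a - gradient g b‖ ≤ L * ‖a - b‖) (x y : E) :
    g x ≤ g y + ⟪gradient g y, x - y⟫ + L / 2 * ‖x - y‖ ^ 2 := by
  set u := x - y with hu
  set φ' : ℝ → ℝ := fun t => ⟪gradient g (y + t • u), u⟫ with hφ'
  have hd : ∀ t : ℝ, HasDerivAt (fun s => g (y + s • u)) (φ' t) t :=
    fun t => aux_hasDerivAt_line hg y u t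
  -- continuity of gradient
  have hgc : Continuous (gradient g) := by
    rcases le_or_gt L 0 with hL0 | hLpos
    · -- gradient is constant
      have : ∀ a, gradient g a = gradient g 0 := by
        intro a
        have h := hsm a 0
        have : ‖gradient g a - gradient g 0‖ ≤ 0 :=
          h.trans (mul_nonpos_of_nonpos_of_nonneg hL0 (norm_nonneg _))
        have := le_antisymm this (norm_nonneg _)
        rwa [norm_eq_zero, sub_eq_zero] at this
      rw [funext this]; exact continuous_const
    · have : LipschitzWith ⟨L, hLpos.le⟩ (gradient g) := by
        apply LipschitzWith.of_dist_le_mul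
        intro a b
        rw [dist_eq_norm, dist_eq_norm]
        exact hsm a b
      exact this.continuous
  have hφc : Continuous φ' := by
    exact (hgc.comp (by continuity)).inner continuous_const
  have hint : ∫ t in (0:ℝ)..1, φ' t = g x - g y := by
    have h := intervalIntegral.integral_eq_sub_of_hasDerivAt
      (f := fun s => g (y + s • u)) (f' := φ') (a := 0) (b := 1)
      (fun t _ => hd t) (hφc.intervalIntegrable 0 1)
    rw [h]
    simp [hu]
  have hbound : ∫ t in (0:ℝ)..1, (φ' t - φ' 0) ≤ ∫ t in (0:ℝ)..1, L * ‖u‖ ^ 2 * t := by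
    apply intervalIntegral.integral_mono_on (by norm_num)
      ((hφc.sub continuous_const).intervalIntegrable 0 1)
      ((continuous_const.mul continuous_id).intervalIntegrable 0 1)
    intro t ht
    show φ' t - φ' 0 ≤ L * ‖u‖ ^ 2 * t
    have h1 : φ' t - φ' 0 = ⟪gradient g (y + t • u) - gradient g (y + (0:ℝ) • u), u⟫ := by
      simp [φ', inner_sub_left]
    rw [h1]
    calc ⟪gradient g (y + t • u) - gradient g (y + (0:ℝ) • u), u⟫
        ≤ ‖gradient g (y + t • u) - gradient g (y + (0:ℝ) • u)‖ * ‖u‖ :=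
          real_inner_le_norm _ _
      _ ≤ (L * ‖(y + t • u) - (y + (0:ℝ) • u)‖) * ‖u‖ := by
          apply mul_le_mul_of_nonneg_right (hsm _ _) (norm_nonneg _)
      _ = L * ‖u‖ ^ 2 * t := by
          have : (y + t • u) - (y + (0:ℝ) • u) = t • u := by
            simp
          rw [this, norm_smul]
          rw [Real.norm_eq_abs, abs_of_nonneg ht.1]
          ring
  have hR : ∫ t in (0:ℝ)..1, L * ‖u‖ ^ 2 * t = L / 2 * ‖u‖ ^ 2 := by
    rw [intervalIntegral.integral_const_mul, integral_id]
    ring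
  have hL2 : ∫ t in (0:ℝ)..1, (φ' t - φ' 0) = (g x - g y) - φ' 0 := by
    rw [intervalIntegral.integral_sub (hφc.intervalIntegrable 0 1)
      intervalIntegrable_const, hint]
    simp
  have hφ0 : φ' 0 = ⟪gradient g y, x - y⟫ := by simp [φ', hu]
  rw [hL2, hR, hφ0] at hbound
  linarith

lemma aux_coco {g : E → ℝ} (hg : Differentiable ℝ g)
    (hconv : ConvexOn ℝ Set.univ g) {L : ℝ} (hL : 0 ≤ L)
    (hsm : ∀ a b, ‖gradient g a - gradient g b‖ ≤ L * ‖a - b‖) (x y : E) :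
    ‖gradient g x - gradient g y‖ ^ 2 ≤ 2 * L * (g x - g y - ⟪gradient g y, x - y⟫) := by
  rcases eq_or_lt_of_le hL with h0 | hLpos
  · have h := hsm x y
    rw [← h0] at h
    simp only [zero_mul] at h
    have : ‖gradient g x - gradient g y‖ = 0 := le_antisymm h (norm_nonneg _)
    rw [this, ← h0]
    norm_num
  · set u := gradient g x - gradient g y with hu
    set z := x - L⁻¹ • u with hz
    have h1 : g y + ⟪gradient g y, z - y⟫ ≤ g z := aux_convex_lower hg hconv z y
    have h2 : g z ≤ g x + ⟪gradient g x, z - x⟫ + L / 2 * ‖z - x‖ ^ 2 :=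
      aux_descent hg hL hsm z x
    have hzx : z - x = -(L⁻¹ • u) := by rw [hz]; abel
    have hzy : z - y = (x - y) - L⁻¹ • u := by rw [hz]; abel
    have e1 : ⟪gradient g x, z - x⟫ = -(L⁻¹ * ⟪gradient g x, u⟫) := by
      rw [hzx, inner_neg_right, real_inner_smul_right]
    have e2 : ⟪gradient g y, z - y⟫ = ⟪gradient g y, x - y⟫ - L⁻¹ * ⟪gradient g y, u⟫ := by
      rw [hzy, inner_sub_right, real_inner_smul_right]
    have e3 : ‖z - x‖ ^ 2 = L⁻¹ ^ 2 * ‖u‖ ^ 2 := by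
      rw [hzx, norm_neg, norm_smul, Real.norm_eq_abs, abs_of_nonneg (inv_nonneg.mpr hL)]
      ring
    have e4 : ⟪gradient g x, u⟫ - ⟪gradient g y, u⟫ = ‖u‖ ^ 2 := by
      rw [← inner_sub_left, ← hu, real_inner_self_eq_norm_sq]
    rw [e1, e3] at h2
    rw [e2] at h1
    have hLne : L ≠ 0 := ne_of_gt hLpos
    have e5 : L⁻¹ * ⟪gradient g x, u⟫ - L⁻¹ * ⟪gradient g y, u⟫ = L⁻¹ * ‖u‖ ^ 2 := by
      rw [← mul_sub, e4]
    have e6 : L / 2 * (L⁻¹ ^ 2 * ‖u‖ ^ 2) = L⁻¹ * ‖u‖ ^ 2 / 2 := by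
      field_simp
    have h8 : L⁻¹ * ‖u‖ ^ 2 / 2 ≤ g x - g y - ⟪gradient g y, x - y⟫ := by linarith
    have h9 : ‖u‖ ^ 2 = 2 * L * (L⁻¹ * ‖u‖ ^ 2 / 2) := by
      field_simp
    rw [h9]
    exact mul_le_mul_of_nonneg_left h8 (by positivity)

end Aux

/-- **Expected smoothness (master lemma).** If each `f i` is differentiable and convex,
`F = (1/n) ∑ f i`, `∇F w* = 0`, `v` is a sampling vector on a finite probability space
(`E[v i] = 1` for all `i`), and each realization `fv ω = (1/n) ∑ f i · v ω i` is convex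
with `Lv ω`-Lipschitz gradient, then the expected smoothness inequality holds with
constant `𝓛 = max_i E[Lv · v i]`. -/
theorem expected_smoothness_master_lemma
    {d n : ℕ} (hd : 1 ≤ d) (hn : 1 ≤ n)
    (f : Fin n → EuclideanSpace ℝ (Fin d) → ℝ)
    (hdiff : ∀ i, Differentiable ℝ (f i))
    (hconv : ∀ i, ConvexOn ℝ Set.univ (f i))
    (F : EuclideanSpace ℝ (Fin d) → ℝ)
    (hF : F = fun w => (1 / (n : ℝ)) * ∑ i, f i w)
    (wstar : EuclideanSpace ℝ (Fin d))
    (hstar : gradient F wstar = 0)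
    (Ω : Type) [Fintype Ω] (p : Ω → ℝ)
    (hp : ∀ ω, 0 ≤ p ω) (hp1 : ∑ ω, p ω = 1)
    (v : Ω → Fin n → ℝ)
    (hv : ∀ i, ∑ ω, p ω * v ω i = 1)
    (fv : Ω → EuclideanSpace ℝ (Fin d) → ℝ)
    (hfv : ∀ ω, fv ω = fun w => (1 / (n : ℝ)) * ∑ i, f i w * v ω i)
    (Lv : Ω → ℝ) (hLv : ∀ ω, 0 ≤ Lv ω)
    (hfvconv : ∀ ω, ConvexOn ℝ Set.univ (fv ω))
    (hfvsmooth : ∀ ω x y, ‖gradient (fv ω) x - gradient (fv ω) y‖ ≤ Lv ω * ‖x - y‖) :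
    ∀ w, ∑ ω, p ω * ‖gradient (fv ω) w - gradient (fv ω) wstar‖ ^ 2 ≤
      2 * (Finset.univ.sup' (Finset.univ_nonempty_iff.mpr (Fin.pos_iff_nonempty.mp hn))
        fun i => ∑ ω, p ω * (Lv ω * v ω i)) * (F w - F wstar) := by
  intro w
  have hn0 : (n : ℝ) ≠ 0 := by positivity
  -- differentiability of fv
  have hfvdiff : ∀ ω, Differentiable ℝ (fv ω) := by
    intro ω; rw [hfv ω]
    exact (Differentiable.fun_sum fun i _ => (hdiff i).mul_const _).const_mul _
  -- gradient of fv
  have hgradfv : ∀ ω a, gradient (fv ω) a =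
      (1 / (n : ℝ)) • ∑ i, v ω i • gradient (f i) a := by
    intro ω a
    have h1 : ∀ i : Fin n, HasFDerivAt (fun w => f i w * v ω i)
        (v ω i • (InnerProductSpace.toDual ℝ (EuclideanSpace ℝ (Fin d)) (gradient (f i) a))) a :=
      fun i => (hasGradientAt_iff_hasFDerivAt.mp ((hdiff i) a).hasGradientAt).mul_const _
    have h2 : HasFDerivAt (fun w => ∑ i, f i w * v ω i)
        (∑ i, v ω i • (InnerProductSpace.toDual ℝ (EuclideanSpace ℝ (Fin d)) (gradient (f i) a))) a :=
      HasFDerivAt.fun_sum (fun i _ => h1 i)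
    have h3 := h2.const_mul (1 / (n : ℝ))
    have h4 : HasFDerivAt (fv ω)
        (InnerProductSpace.toDual ℝ (EuclideanSpace ℝ (Fin d)) ((1 / (n : ℝ)) • ∑ i, v ω i • gradient (f i) a)) a := by
      rw [hfv ω]
      refine h3.congr_fderiv ?_
      simp [map_smulₛₗ, map_sum]
    exact (hasGradientAt_iff_hasFDerivAt.mpr h4).gradient
  -- gradient of F
  have hgradF : ∀ a, gradient F a = (1 / (n : ℝ)) • ∑ i, gradient (f i) a := by
    intro a
    have h2 : HasFDerivAt (fun w => ∑ i, f i w)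
        (∑ i, InnerProductSpace.toDual ℝ (EuclideanSpace ℝ (Fin d)) (gradient (f i) a)) a :=
      HasFDerivAt.fun_sum (fun i _ =>
        hasGradientAt_iff_hasFDerivAt.mp ((hdiff i) a).hasGradientAt)
    have h3 := h2.const_mul (1 / (n : ℝ))
    have h4 : HasFDerivAt F
        (InnerProductSpace.toDual ℝ (EuclideanSpace ℝ (Fin d)) ((1 / (n : ℝ)) • ∑ i, gradient (f i) a)) a := by
      rw [hF]
      refine h3.congr_fderiv ?_
      simp [map_smulₛₗ, map_sum]
    exact (hasGradientAt_iff_hasFDerivAt.mpr h4).gradient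
  have hsum0 : ∑ i, gradient (f i) wstar = (0 : EuclideanSpace ℝ (Fin d)) := by
    have h := hgradF wstar
    rw [hstar] at h
    have := h.symm
    rw [smul_eq_zero] at this
    rcases this with h' | h'
    · exact absurd h' (by simp [hn0])
    · exact h'
  -- the convexity gaps
  set D : Fin n → ℝ := fun i => f i w - f i wstar - ⟪gradient (f i) wstar, w - wstar⟫ with hD
  have hD0 : ∀ i, 0 ≤ D i := by
    intro i
    have := aux_convex_lower (hdiff i) (hconv i) w wstar
    simp only [hD]
    linarith
  have hFdiff : F w - F wstar = (1 / (n : ℝ)) * ∑ i, D i := by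
    have hz : ∑ i, ⟪gradient (f i) wstar, w - wstar⟫ = 0 := by
      rw [← sum_inner, hsum0, inner_zero_left]
    have hDsum : ∑ i, D i = ∑ i, f i w - ∑ i, f i wstar := by
      simp only [hD]
      rw [Finset.sum_sub_distrib, Finset.sum_sub_distrib, hz]
      ring
    rw [hF, hDsum]
    ring
  -- per-ω key inequality
  have hkey : ∀ ω, ‖gradient (fv ω) w - gradient (fv ω) wstar‖ ^ 2 ≤
      2 * Lv ω * ((1 / (n : ℝ)) * ∑ i, v ω i * D i) := by
    intro ω
    have hco := aux_coco (hfvdiff ω) (hfvconv ω) (hLv ω) (hfvsmooth ω) w wstar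
    have hval : fv ω w - fv ω wstar - ⟪gradient (fv ω) wstar, w - wstar⟫ =
        (1 / (n : ℝ)) * ∑ i, v ω i * D i := by
      rw [hgradfv ω wstar, hfv ω]
      simp only
      rw [real_inner_smul_left, sum_inner]
      simp only [real_inner_smul_left]
      have h5 : ∑ i, v ω i * D i =
          ∑ i, f i w * v ω i - ∑ i, f i wstar * v ω i -
            ∑ i, v ω i * ⟪gradient (f i) wstar, w - wstar⟫ := by
        rw [← Finset.sum_sub_distrib, ← Finset.sum_sub_distrib]
        apply Finset.sum_congr rfl
        intro i _
        simp only [hD]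
        ring
      rw [h5]
      ring
    rw [hval] at hco
    exact hco
  set 𝓛 := Finset.univ.sup' (Finset.univ_nonempty_iff.mpr (Fin.pos_iff_nonempty.mp hn))
    (fun i => ∑ ω, p ω * (Lv ω * v ω i)) with h𝓛
  calc ∑ ω, p ω * ‖gradient (fv ω) w - gradient (fv ω) wstar‖ ^ 2
      ≤ ∑ ω, p ω * (2 * Lv ω * ((1 / (n : ℝ)) * ∑ i, v ω i * D i)) :=
        Finset.sum_le_sum fun ω _ => mul_le_mul_of_nonneg_left (hkey ω) (hp ω)
    _ = (2 / (n : ℝ)) * ∑ i, D i * (∑ ω, p ω * (Lv ω * v ω i)) := by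
        have h6 : ∀ ω : Ω, p ω * (2 * Lv ω * ((1 / (n : ℝ)) * ∑ i, v ω i * D i)) =
            ∑ i, (2 / (n : ℝ)) * (D i * (p ω * (Lv ω * v ω i))) := by
          intro ω
          rw [Finset.mul_sum, Finset.mul_sum, Finset.mul_sum]
          apply Finset.sum_congr rfl
          intro i _
          ring
        simp_rw [h6]
        rw [Finset.sum_comm]
        rw [Finset.mul_sum]
        apply Finset.sum_congr rfl
        intro i _
        rw [Finset.mul_sum, Finset.mul_sum]
    _ ≤ (2 / (n : ℝ)) * ∑ i, D i * 𝓛 := by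
        apply mul_le_mul_of_nonneg_left _ (by positivity)
        apply Finset.sum_le_sum
        intro i _
        exact mul_le_mul_of_nonneg_left
          (Finset.le_sup' (fun j => ∑ ω, p ω * (Lv ω * v ω j)) (Finset.mem_univ i)) (hD0 i)
    _ = 2 * 𝓛 * (F w - F wstar) := by
        rw [hFdiff, ← Finset.sum_mul]
        ring
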